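/- arXiv:0911.5372 — 2 statements merged into one kernel-verified Lean document; each statement's English description precedes it below -/
import Mathlib

section
/- In a finite connected weighted graph, for any two vertices i and j, the unique path between i and j in any maximum spanning tree is a maximin path; that is, its minimum edge weight equals the maximin affinity A*_ij. -/
open SimpleGraph

/-- The graph obtained from `G` by keeping only the edges of weight `≥ θ`. -/
def thresholded {V : Type*} (G : SimpleGraph V) (A : Sym2 V → ℝ) (θ : ℝ) :
    SimpleGraph V where
  Adj i j := G.Adj i j ∧ θ ≤ A s(i, j)
  symm := by
    constructor
    intro i j h
    exact ⟨h.1.symm, by rw [Sym2.eq_swap]; exact h.2⟩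
  loopless := by constructor; intro i h; exact G.irrefl h.1

/-- The bottleneck (minimal edge weight) of a walk, with value `⊤` for the empty walk. -/
noncomputable def bottleneck {V : Type*} {G : SimpleGraph V} (A : Sym2 V → ℝ) {i j : V}
    (p : G.Walk i j) : WithTop ℝ :=
  p.edges.foldr (fun e m => min (A e : WithTop ℝ) m) ⊤

/-- `T` is a maximum spanning tree of the weighted graph `(G, A)`: a spanning tree
maximizing the total edge weight among all spanning trees of `G`. -/
def IsMaxSpanningTree {V : Type*} [Fintype V] (G : SimpleGraph V) (A : Sym2 V → ℝ)
    (T : SimpleGraph V) : Prop :=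
  T ≤ G ∧ T.IsTree ∧
    ∀ T' : SimpleGraph V, T' ≤ G → T'.IsTree →
      ∑ e ∈ (Set.toFinite T'.edgeSet).toFinset, A e ≤
        ∑ e ∈ (Set.toFinite T.edgeSet).toFinset, A e

section auxlem
variable {V : Type*} {G H : SimpleGraph V} (A : Sym2 V → ℝ)

lemma le_foldr_min (l : List (Sym2 V)) (x : WithTop ℝ) :
    x ≤ l.foldr (fun e m => min (A e : WithTop ℝ) m) ⊤ ↔ ∀ e ∈ l, x ≤ (A e : WithTop ℝ) := by
  induction l with
  | nil => simp
  | cons a l ih => simp [le_min_iff, ih]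

lemma le_bottleneck_iff {i j : V} (p : G.Walk i j) (x : WithTop ℝ) :
    x ≤ bottleneck A p ↔ ∀ e ∈ p.edges, x ≤ (A e : WithTop ℝ) :=
  le_foldr_min A p.edges x

lemma bottleneck_le_of_mem {i j : V} (p : G.Walk i j) {e : Sym2 V} (he : e ∈ p.edges) :
    bottleneck A p ≤ (A e : WithTop ℝ) :=
  (le_bottleneck_iff A p _).1 le_rfl e he

lemma bottleneck_cons {i j k : V} (h : G.Adj i j) (p : G.Walk j k) :
    bottleneck A (Walk.cons h p) = min (A s(i, j) : WithTop ℝ) (bottleneck A p) := by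
  simp [bottleneck]

lemma bottleneck_transfer {i j : V} (p : G.Walk i j) (hp : ∀ e ∈ p.edges, e ∈ H.edgeSet) :
    bottleneck A (p.transfer H hp) = bottleneck A p := by
  simp [bottleneck, Walk.edges_transfer]

end auxlem

lemma exchange_lemma {V : Type*} [Fintype V] (G : SimpleGraph V) (A : Sym2 V → ℝ)
    (T : SimpleGraph V) (hT : IsMaxSpanningTree G A T) {u v : V} (huv : G.Adj u v)
    (r : T.Walk u v) (hr : r.IsPath) :
    (A s(u, v) : WithTop ℝ) ≤ bottleneck A r := by
  classical
  rw [le_bottleneck_iff]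
  intro e he
  by_contra hlt
  push_neg at hlt
  rw [WithTop.coe_lt_coe] at hlt
  -- hlt : A e < A s(u, v)
  by_cases hTuv : T.Adj u v
  · have h1 : (Walk.cons hTuv Walk.nil).IsPath := by
      simp [Walk.cons_isPath_iff, hTuv.ne]
    have h2 : r = Walk.cons hTuv Walk.nil :=
      (hT.2.1.existsUnique_path u v).unique hr h1
    rw [h2] at he
    simp at he
    rw [he] at hlt
    exact lt_irrefl _ hlt
  -- main case : s(u,v) not an edge of T
  have hef : e ≠ s(u, v) := fun h => absurd hlt (by rw [h]; exact lt_irrefl _)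
  have hfT : s(u, v) ∉ T.edgeSet := hTuv
  have heT : e ∈ T.edgeSet := r.edges_subset_edgeSet he
  set T' : SimpleGraph V :=
    { Adj := fun x y => (T.Adj x y ∧ s(x, y) ≠ e) ∨ (s(x, y) = s(u, v) ∧ x ≠ y)
      symm := by
        constructor
        intro x y h
        rcases h with ⟨h1, h2⟩ | ⟨h1, h2⟩
        · exact Or.inl ⟨h1.symm, by rw [Sym2.eq_swap]; exact h2⟩
        · exact Or.inr ⟨by rw [Sym2.eq_swap]; exact h1, h2.symm⟩
      loopless := by
        constructor
        intro x h
        rcases h with ⟨h1, _⟩ | ⟨_, h2⟩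
        · exact T.irrefl h1
        · exact h2 rfl } with hT'def
  have hT'adj : ∀ x y : V, T'.Adj x y ↔ (T.Adj x y ∧ s(x, y) ≠ e) ∨ (s(x, y) = s(u, v) ∧ x ≠ y) :=
    fun x y => Iff.rfl
  have hT'edge : T'.edgeSet = insert s(u, v) (T.edgeSet \ {e}) := by
    ext e'
    induction e' using Sym2.ind with
    | _ x y =>
      rw [mem_edgeSet, hT'adj]
      simp only [Set.mem_insert_iff, Set.mem_diff, Set.mem_singleton_iff, mem_edgeSet]
      constructor
      · rintro (⟨h1, h2⟩ | ⟨h1, _⟩)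
        · exact Or.inr ⟨h1, h2⟩
        · exact Or.inl h1
      · rintro (h1 | ⟨h1, h2⟩)
        · refine Or.inr ⟨h1, ?_⟩
          rw [Sym2.eq_iff] at h1
          rcases h1 with ⟨rfl, rfl⟩ | ⟨rfl, rfl⟩
          · exact huv.ne
          · exact huv.ne'
        · exact Or.inl ⟨h1, h2⟩
  have heT' : e ∉ T'.edgeSet := by
    rw [hT'edge]
    simp [hef]
  have hT'G : T' ≤ G := by
    intro x y h
    rcases h with ⟨h1, _⟩ | ⟨h1, _⟩
    · exact hT.1 h1
    · rw [Sym2.eq_iff] at h1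
      rcases h1 with ⟨rfl, rfl⟩ | ⟨rfl, rfl⟩
      · exact huv
      · exact huv.symm
  have key : T'.Reachable u v := Adj.reachable (Or.inr ⟨rfl, huv.ne⟩)
  -- endpoints of e are reachable in T'
  have L : ∀ (c d : V) (w : T.Walk c d), w.IsPath → e ∈ w.edges → T'.Reachable c d →
      ∀ x y : V, s(x, y) = e → T'.Reachable x y := by
    intro c d w
    induction w with
    | nil => intro _ h; simp at h
    | @cons c c' d h w ih =>
      intro hw hew hcd x y hxy
      by_cases hce : s(c, c') = e
      · -- w avoids e since the path's edges are nodup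
        have hnd := hw.isTrail.edges_nodup
        rw [Walk.edges_cons] at hnd
        have hwne : e ∉ w.edges := by
          rw [← hce]
          exact (List.nodup_cons.1 hnd).1
        have hsub : ∀ e' ∈ w.edges, e' ∈ T'.edgeSet := by
          intro e' he'
          rw [hT'edge]
          exact Or.inr ⟨w.edges_subset_edgeSet he', fun hh => hwne (hh ▸ he')⟩
        have hc'd : T'.Reachable c' d := ⟨w.transfer T' hsub⟩
        have hcc' : T'.Reachable c c' := hcd.trans hc'd.symm
        rw [← hce] at hxy
        rw [Sym2.eq_iff] at hxy
        rcases hxy with ⟨rfl, rfl⟩ | ⟨rfl, rfl⟩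
        · exact hcc'
        · exact hcc'.symm
      · have hcc' : T'.Adj c c' := Or.inl ⟨h, hce⟩
        have hc'd : T'.Reachable c' d := (hcc'.reachable).symm.trans hcd
        have hew' : e ∈ w.edges := by
          rw [Walk.edges_cons] at hew
          rcases List.mem_cons.1 hew with h1 | h1
          · exact absurd h1.symm hce
          · exact h1
        exact ih hw.of_cons hew' hc'd x y hxy
  have hE : ∀ x y : V, s(x, y) = e → T'.Reachable x y := L u v r hr he key
  -- T' is connected
  have hpre : T'.Preconnected := by
    intro x y
    obtain ⟨w⟩ := hT.2.1.isConnected.preconnected x y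
    induction w with
    | nil => exact Reachable.refl _
    | @cons a b c h w ih =>
      by_cases hab : s(a, b) = e
      · exact (hE a b hab).trans ih
      · exact (Adj.reachable (Or.inl ⟨h, hab⟩)).trans ih
  have hT'conn : T'.Connected := by
    haveI := hT.2.1.isConnected.nonempty
    exact ⟨hpre⟩
  -- T' is acyclic
  have hac : T'.IsAcyclic := by
    intro x c hc
    by_cases hfc : s(u, v) ∈ c.edges
    · have hreach : T'.Adj u v ∧ (T' \ fromEdgeSet {s(u, v)}).Reachable u v :=
        (adj_and_reachable_delete_edges_iff_exists_cycle).2 ⟨x, c, hc, hfc⟩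
      obtain ⟨p', hfp'⟩ := (reachable_delete_edges_iff_exists_walk).1 hreach.2
      have hsub : ∀ e' ∈ p'.bypass.edges, e' ∈ T.edgeSet := by
        intro e' he'
        have h1 : e' ∈ T'.edgeSet := p'.bypass.edges_subset_edgeSet he'
        rw [hT'edge] at h1
        rcases h1 with h1 | h1
        · exact absurd (h1 ▸ (p'.edges_bypass_subset he')) hfp'
        · exact h1.1
      have hq : (p'.bypass.transfer T hsub).IsPath := p'.bypass_isPath.transfer hsub
      have hre : r = p'.bypass.transfer T hsub :=
        (hT.2.1.existsUnique_path u v).unique hr hq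
      have : e ∈ (p'.bypass.transfer T hsub).edges := hre ▸ he
      rw [Walk.edges_transfer] at this
      exact heT' (p'.bypass.edges_subset_edgeSet this)
    · have hsub : ∀ e' ∈ c.edges, e' ∈ T.edgeSet := by
        intro e' he'
        have h1 : e' ∈ T'.edgeSet := c.edges_subset_edgeSet he'
        rw [hT'edge] at h1
        rcases h1 with h1 | h1
        · exact absurd (h1 ▸ he') hfc
        · exact h1.1
      exact hT.2.1.IsAcyclic (c.transfer T hsub) (hc.transfer hsub)
  have hT'tree : T'.IsTree := ⟨hT'conn, hac⟩
  -- weight comparison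
  have hmax := hT.2.2 T' hT'G hT'tree
  have hs' : (Set.toFinite T'.edgeSet).toFinset =
      insert s(u, v) (((Set.toFinite T.edgeSet).toFinset).erase e) := by
    ext e'
    simp only [Set.Finite.mem_toFinset, hT'edge, Set.mem_insert_iff, Set.mem_diff,
      Set.mem_singleton_iff, Finset.mem_insert, Finset.mem_erase]
    tauto
  have hfnm : s(u, v) ∉ ((Set.toFinite T.edgeSet).toFinset).erase e := by
    rw [Finset.mem_erase, Set.Finite.mem_toFinset]
    rintro ⟨-, h⟩
    exact hfT h
  have hem : e ∈ (Set.toFinite T.edgeSet).toFinset := by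
    rw [Set.Finite.mem_toFinset]
    exact heT
  rw [hs', Finset.sum_insert hfnm] at hmax
  have herase : ∑ x ∈ ((Set.toFinite T.edgeSet).toFinset).erase e, A x + A e
      = ∑ x ∈ (Set.toFinite T.edgeSet).toFinset, A x :=
    Finset.sum_erase_add _ _ hem
  linarith


/-- The unique path between `i` and `j` in any maximum spanning tree is a maximin
path: its bottleneck equals the maximin affinity `A*_ij` in `G`. -/
theorem stmt_4 {V : Type*} [Fintype V] (G : SimpleGraph V) (hG : G.Connected)
    (A : Sym2 V → ℝ) (T : SimpleGraph V) (hT : IsMaxSpanningTree G A T)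
    (i j : V) (p : T.Walk i j) (hp : p.IsPath) (Astar : WithTop ℝ)
    (hA : IsGreatest {x | ∃ q : G.Walk i j, bottleneck A q = x} Astar) :
    bottleneck A p = Astar := by
  classical
  have hsubG : ∀ {x y : V} (w : T.Walk x y), ∀ e ∈ w.edges, e ∈ G.edgeSet := by
    intro x y w e he
    exact (edgeSet_mono hT.1) (w.edges_subset_edgeSet he)
  have h1 : bottleneck A p ≤ Astar :=
    hA.2 ⟨p.transfer G (hsubG p), bottleneck_transfer A p (hsubG p)⟩
  obtain ⟨q, hq⟩ := hA.1
  have main : ∀ (x y : V) (q : G.Walk x y) (r : T.Walk x y), r.IsPath →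
      bottleneck A q ≤ bottleneck A r := by
    intro x y q
    induction q with
    | nil =>
      intro r hr
      have : r = Walk.nil := (hT.2.1.existsUnique_path _ _).unique hr Walk.IsPath.nil
      rw [this]
      exact le_top
    | @cons x w y h q ih =>
      intro r hr
      obtain ⟨r1, hr1, -⟩ := hT.2.1.existsUnique_path x w
      obtain ⟨r2, hr2, -⟩ := hT.2.1.existsUnique_path w y
      have k1 : (A s(x, w) : WithTop ℝ) ≤ bottleneck A r1 :=
        exchange_lemma G A T hT h r1 hr1
      have k2 : bottleneck A q ≤ bottleneck A r2 := ih r2 hr2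
      have hre : r = (r1.append r2).bypass :=
        (hT.2.1.existsUnique_path x y).unique hr (r1.append r2).bypass_isPath
      rw [hre, le_bottleneck_iff]
      intro e he
      have : e ∈ r1.edges ++ r2.edges := by
        rw [← Walk.edges_append]
        exact (r1.append r2).edges_bypass_subset he
      rw [bottleneck_cons]
      rcases List.mem_append.1 this with h' | h'
      · exact (min_le_left _ _).trans (k1.trans (bottleneck_le_of_mem A r1 h'))
      · exact (min_le_right _ _).trans (k2.trans (bottleneck_le_of_mem A r2 h'))
  have h2 : Astar ≤ bottleneck A p := by
    rw [← hq]
    exact main i j q p hp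
  exact le_antisymm h1 h2
end

section
/- Let H be the Heaviside step function (H(x) = 1 if x ≥ 0, else 0). For the segmentation Ŝ by connected components of the graph thresholded at θ, the connectivity indicator satisfies δ(ŝ_i, ŝ_j) = H(A*_ij − θ) for all distinct vertices i, j in a connected finite weighted graph. -/
open SimpleGraph

open Classical in
/-- The indicator `δ(a,b)` that two labels are equal. -/
noncomputable def eqInd {α : Type*} (a b : α) : ℝ := if a = b then 1 else 0

open Classical in
/-- The Rand dissimilarity `1 - RI` between two labelings of a finite linearly
ordered set: the fraction of pairs `i < j` on which the labelings disagree
about whether `i` and `j` get the same label. -/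
noncomputable def randDissim {V : Type*} [Fintype V] [LinearOrder V]
    {L L' : Type*} (S : V → L) (T : V → L') : ℝ :=
  (((Fintype.card V).choose 2 : ℝ))⁻¹ *
    ∑ p ∈ Finset.univ.filter (fun p : V × V => p.1 < p.2),
      |eqInd (S p.1) (S p.2) - eqInd (T p.1) (T p.2)|

/-- The Heaviside step function: `H x = 1` if `x ≥ 0`, else `0`. -/
noncomputable def heaviside (x : ℝ) : ℝ := if 0 ≤ x then 1 else 0

section Aux

variable {V : Type*}

private noncomputable def fList (A : Sym2 V → ℝ) (l : List (Sym2 V)) : WithTop ℝ :=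
  l.foldr (fun e m => min (A e : WithTop ℝ) m) ⊤

private lemma fList_le {A : Sym2 V → ℝ} (l : List (Sym2 V)) :
    ∀ e ∈ l, fList A l ≤ (A e : WithTop ℝ) := by
  induction l with
  | nil => simp
  | cons a l ih =>
    intro e he
    rcases List.mem_cons.mp he with rfl | he
    · exact min_le_left _ _
    · exact le_trans (min_le_right _ _) (ih e he)

private lemma le_fList {A : Sym2 V → ℝ} {l : List (Sym2 V)} {θ : ℝ}
    (h : ∀ e ∈ l, θ ≤ A e) : (θ : WithTop ℝ) ≤ fList A l := by
  induction l with
  | nil => exact le_top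
  | cons a l ih =>
    refine le_min ?_ (ih fun e he => h e (List.mem_cons_of_mem _ he))
    exact_mod_cast h a List.mem_cons_self

private lemma fList_ne_top {A : Sym2 V → ℝ} {l : List (Sym2 V)} (h : l ≠ []) :
    fList A l ≠ ⊤ := by
  cases l with
  | nil => exact absurd rfl h
  | cons a l =>
    intro hT
    have := min_le_left (A a : WithTop ℝ) (fList A l)
    rw [show fList A (a :: l) = min (A a : WithTop ℝ) (fList A l) from rfl] at hT
    rw [hT] at this
    exact (WithTop.coe_ne_top (a := A a)) (top_le_iff.mp this)

private lemma bottleneck_eq_fList {G : SimpleGraph V} (A : Sym2 V → ℝ) {i j : V}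
    (p : G.Walk i j) : bottleneck A p = fList A p.edges := rfl

end Aux

/-- The connectivity indicator of the connected-component segmentation of the
thresholded graph is the Heaviside function of `A*_ij - θ`. -/
theorem stmt_16 {V : Type*} [Fintype V] (G : SimpleGraph V) (hG : G.Connected)
    (A : Sym2 V → ℝ) (θ : ℝ) (i j : V) (hij : i ≠ j) (Astar : ℝ)
    (hA : IsGreatest {x : ℝ | ∃ p : G.Walk i j, bottleneck A p = (x : WithTop ℝ)}
      Astar) :
    eqInd ((thresholded G A θ).connectedComponentMk i)
        ((thresholded G A θ).connectedComponentMk j) =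
      heaviside (Astar - θ) := by
  by_cases hθ : θ ≤ Astar
  · -- reachable in thresholded graph
    obtain ⟨p, hp⟩ := hA.1
    have hedges : ∀ e ∈ p.edges, e ∈ (thresholded G A θ).edgeSet := by
      intro e he
      have h1 : (Astar : WithTop ℝ) ≤ (A e : WithTop ℝ) := hp ▸ fList_le p.edges e he
      have h2 : Astar ≤ A e := by exact_mod_cast h1
      have hG : e ∈ G.edgeSet := p.edges_subset_edgeSet he
      induction e with
      | h a b => exact ⟨hG, le_trans hθ h2⟩
    have hreach : (thresholded G A θ).Reachable i j := ⟨p.transfer _ hedges⟩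
    have hcomp : (thresholded G A θ).connectedComponentMk i =
        (thresholded G A θ).connectedComponentMk j :=
      ConnectedComponent.sound hreach
    rw [eqInd, if_pos hcomp, heaviside, if_pos (by linarith)]
  · -- not reachable
    push_neg at hθ
    have hcomp : (thresholded G A θ).connectedComponentMk i ≠
        (thresholded G A θ).connectedComponentMk j := by
      intro hc
      obtain ⟨q⟩ := ConnectedComponent.eq.mp hc
      have hedges : ∀ e ∈ q.edges, e ∈ G.edgeSet := by
        intro e he
        have := q.edges_subset_edgeSet he
        induction e with
        | h a b => exact this.1
      have hθe : ∀ e ∈ q.edges, θ ≤ A e := by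
        intro e he
        have := q.edges_subset_edgeSet he
        induction e with
        | h a b => exact this.2
      have hne : q.edges ≠ [] := by
        intro h0
        have : q.length = 0 := by
          have := SimpleGraph.Walk.length_edges q
          rw [h0] at this
          simpa using this.symm
        exact hij (SimpleGraph.Walk.eq_of_length_eq_zero this)
      obtain ⟨x, hx⟩ : ∃ x : ℝ, fList A q.edges = (x : WithTop ℝ) := by
        cases h : fList A q.edges with
        | top => exact absurd h (fList_ne_top hne)
        | coe x => exact ⟨x, rfl⟩
      have hθx : θ ≤ x := by
        have := le_fList hθe (A := A)
        rw [hx] at this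
        exact_mod_cast this
      have hxA : x ≤ Astar := by
        refine hA.2 ⟨q.transfer G hedges, ?_⟩
        rw [bottleneck_eq_fList, SimpleGraph.Walk.edges_transfer, hx]
      linarith
    rw [eqInd, if_neg hcomp, heaviside, if_neg (by linarith)]
end
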